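/- Let G be a finite simple graph with at least one vertex, let v ∈ V(G), let l ∈ ℕ, and let H ∈ IIM_l(G). Let S_c(v) consist of v together with every copy of v created at some step i (1 ≤ i ≤ l) that is a clone of v, and let S_a(v) consist of every copy of v created at some step i that is an anticlone of v. Then S_c(v) and S_a(v) each induce a complete subgraph of H, and |S_c(v)| + |S_a(v)| = l + 1; consequently ω(H) ≥ ⌈(l+1)/2⌉. -/

import Mathlib

/-- Vertex type after `l` IIM steps starting from vertex type `V`:
at each step every existing vertex gets one new copy. -/
def IterV (V : Type) : ℕ → Type
  | 0 => V
  | l + 1 => IterV V l ⊕ IterV V l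

instance iterVFintype {V : Type} [Fintype V] : ∀ l, Fintype (IterV V l)
  | 0 => inferInstanceAs (Fintype V)
  | l + 1 =>
    letI := iterVFintype (V := V) l
    inferInstanceAs (Fintype (IterV V l ⊕ IterV V l))

instance iterVNonempty {V : Type} [Nonempty V] : ∀ l, Nonempty (IterV V l)
  | 0 => inferInstanceAs (Nonempty V)
  | l + 1 =>
    letI := iterVNonempty (V := V) l
    inferInstanceAs (Nonempty (IterV V l ⊕ IterV V l))

/-- One IIM step: each vertex `v` of `G` gets a new copy (`Sum.inr v`), which is a
clone of `v` (joined to the closed neighborhood of `v`) if `σ v = true`, and an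
anticlone of `v` (joined to the complement of the closed neighborhood) if `σ v = false`.
Old vertices (`Sum.inl`) keep the edges of `G`; new vertices form an independent set. -/
def iimStep {V : Type} (G : SimpleGraph V) (σ : V → Bool) : SimpleGraph (V ⊕ V) where
  Adj x y :=
    match x, y with
    | Sum.inl u, Sum.inl v => G.Adj u v
    | Sum.inl u, Sum.inr v =>
        if σ v = true then u = v ∨ G.Adj u v else ¬(u = v ∨ G.Adj u v)
    | Sum.inr u, Sum.inl v =>
        if σ u = true then v = u ∨ G.Adj v u else ¬(v = u ∨ G.Adj v u)
    | Sum.inr _, Sum.inr _ => False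
  symm := by
    constructor
    rintro (u | u) (v | v) h
    · exact G.adj_symm h
    · exact h
    · exact h
    · exact h
  loopless := by
    constructor
    rintro (u | u) h
    · exact G.ne_of_adj h rfl
    · exact h

/-- The IIM graph after `l` steps starting from `G`, where `σ i` records, for each
vertex existing after `i` steps, whether its copy created at step `i+1` is a clone
(`true`) or an anticlone (`false`).  `IIM_l(G)` is exactly the set of graphs of the
form `iimGraph G σ l` as `σ` varies. -/
def iimGraph {V : Type} (G : SimpleGraph V) (σ : ∀ i, IterV V i → Bool) :
    ∀ l, SimpleGraph (IterV V l)
  | 0 => G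
  | l + 1 => iimStep (iimGraph G σ l) (σ l)

/-- The level (creation step) of a vertex of an IIM graph. -/
def levelOf {V : Type} : ∀ l, IterV V l → ℕ
  | 0, _ => 0
  | l + 1, Sum.inl x => levelOf l x
  | l + 1, Sum.inr _ => l + 1

/-- The (level-0) vertex `x` of the initial graph, viewed as a vertex of the IIM graph
after `l` steps. -/
def liftV {V : Type} (x : V) : ∀ l, IterV V l
  | 0 => x
  | l + 1 => Sum.inl (liftV x l)

/-- `S_c(x)`: the set consisting of `x` together with every copy of `x` (created at
some step `1 ≤ i ≤ l`) that is a clone of `x`, inside the IIM graph after `l` steps. -/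
def cloneSet {V : Type} (σ : ∀ i, IterV V i → Bool) (x : V) :
    ∀ l, Set (IterV V l)
  | 0 => {x}
  | l + 1 =>
      Sum.inl '' cloneSet σ x l ∪
        (if σ l (liftV x l) = true then {Sum.inr (liftV x l)} else ∅)

/-- `S_a(x)`: the set of all copies of `x` (created at some step `1 ≤ i ≤ l`) that are
anticlones of `x`, inside the IIM graph after `l` steps. -/
def anticloneSet {V : Type} (σ : ∀ i, IterV V i → Bool) (x : V) :
    ∀ l, Set (IterV V l)
  | 0 => ∅
  | l + 1 =>
      Sum.inl '' anticloneSet σ x l ∪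
        (if σ l (liftV x l) = false then {Sum.inr (liftV x l)} else ∅)

section
variable {V : Type}

lemma iimStep_adj_lr (G : SimpleGraph V) (σ : V → Bool) (u w : V) :
    (iimStep G σ).Adj (Sum.inl u) (Sum.inr w) ↔
      (if σ w = true then u = w ∨ G.Adj u w else ¬(u = w ∨ G.Adj u w)) := Iff.rfl

lemma iimStep_adj_ll (G : SimpleGraph V) (σ : V → Bool) (u w : V) :
    (iimStep G σ).Adj (Sum.inl u) (Sum.inl w) ↔ G.Adj u w := Iff.rfl

lemma key [Fintype V] (G : SimpleGraph V) (v : V) (σ : ∀ i, IterV V i → Bool) :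
    ∀ l, (iimGraph G σ l).IsClique (cloneSet σ v l) ∧
       (iimGraph G σ l).IsClique (anticloneSet σ v l) ∧
       (∀ y ∈ cloneSet σ v l, y = liftV v l ∨ (iimGraph G σ l).Adj y (liftV v l)) ∧
       (∀ y ∈ anticloneSet σ v l, ¬(y = liftV v l ∨ (iimGraph G σ l).Adj y (liftV v l))) ∧
       (cloneSet σ v l).ncard + (anticloneSet σ v l).ncard = l + 1 := by
  intro l
  induction l with
  | zero =>
    refine ⟨?_, ?_, ?_, ?_, ?_⟩
    · exact Set.pairwise_singleton _ _
    · simp [anticloneSet, Set.Pairwise]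
    · intro y hy; left; exact hy
    · intro y hy; simp [anticloneSet] at hy
    · show ({v} : Set V).ncard + (∅ : Set V).ncard = 0 + 1
      simp
  | succ l ih =>
    obtain ⟨hc, ha, hnc, hna, hcard⟩ := ih
    haveI : Fintype (IterV V l) := iterVFintype l
    constructor
    · -- clone clique
      intro a ha' b hb' hab
      show (iimStep (iimGraph G σ l) (σ l)).Adj a b
      rcases ha' with ⟨x, hx, rfl⟩ | hx
      · rcases hb' with ⟨y, hy, rfl⟩ | hy
        · exact hc hx hy (fun h => hab (by rw [h]))
        · by_cases hσ : σ l (liftV v l) = true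
          · simp only [hσ, if_true, Set.mem_singleton_iff] at hy
            subst hy
            rw [iimStep_adj_lr, if_pos hσ]
            exact hnc x hx
          · simp [hσ] at hy
      · by_cases hσ : σ l (liftV v l) = true
        · simp only [hσ, if_true, Set.mem_singleton_iff] at hx
          subst hx
          rcases hb' with ⟨y, hy, rfl⟩ | hy
          · exact SimpleGraph.Adj.symm (by rw [iimStep_adj_lr, if_pos hσ]; exact hnc y hy)
          · simp only [hσ, if_true, Set.mem_singleton_iff] at hy
            exact (hab hy.symm).elim
        · simp [hσ] at hx
    constructor
    · -- anticlone clique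
      intro a ha' b hb' hab
      show (iimStep (iimGraph G σ l) (σ l)).Adj a b
      rcases ha' with ⟨x, hx, rfl⟩ | hx
      · rcases hb' with ⟨y, hy, rfl⟩ | hy
        · exact ha hx hy (fun h => hab (by rw [h]))
        · by_cases hσ : σ l (liftV v l) = false
          · simp only [hσ, if_true, Set.mem_singleton_iff] at hy
            subst hy
            rw [iimStep_adj_lr]
            have : σ l (liftV v l) ≠ true := by simp [hσ]
            rw [if_neg this]
            exact hna x hx
          · simp [hσ] at hy
      · by_cases hσ : σ l (liftV v l) = false
        · simp only [hσ, if_true, Set.mem_singleton_iff] at hx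
          subst hx
          rcases hb' with ⟨y, hy, rfl⟩ | hy
          · refine SimpleGraph.Adj.symm ?_
            rw [iimStep_adj_lr, if_neg (by simp [hσ])]
            exact hna y hy
          · simp only [hσ, if_true, Set.mem_singleton_iff] at hy
            exact (hab hy.symm).elim
        · simp [hσ] at hx
    constructor
    · -- clone in closed nbhd
      intro y hy
      rcases hy with ⟨x, hx, rfl⟩ | hy
      · rcases hnc x hx with h | h
        · left; rw [h]; rfl
        · right; exact h
      · by_cases hσ : σ l (liftV v l) = true
        · simp only [hσ, if_true, Set.mem_singleton_iff] at hy
          subst hy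
          right
          show (iimStep (iimGraph G σ l) (σ l)).Adj _ (Sum.inl (liftV v l))
          refine SimpleGraph.Adj.symm ?_
          rw [iimStep_adj_lr, if_pos hσ]
          left; rfl
        · simp [hσ] at hy
    constructor
    · -- anticlone outside closed nbhd
      intro y hy
      rcases hy with ⟨x, hx, rfl⟩ | hy
      · rintro (h | h)
        · exact hna x hx (Or.inl (Sum.inl.injEq .. ▸ (by injection h)))
        · exact hna x hx (Or.inr h)
      · by_cases hσ : σ l (liftV v l) = false
        · simp only [hσ, if_true, Set.mem_singleton_iff] at hy
          subst hy
          rintro (h | h)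
          · exact Sum.inr_ne_inl h
          · have : (iimStep (iimGraph G σ l) (σ l)).Adj (Sum.inl (liftV v l)) (Sum.inr (liftV v l)) := h.symm
            rw [iimStep_adj_lr, if_neg (by simp [hσ])] at this
            exact this (Or.inl rfl)
        · simp [hσ] at hy
    · -- cardinality
      have hinj : Function.Injective (Sum.inl : IterV V l → IterV V l ⊕ IterV V l) :=
        Sum.inl_injective
      have h1 : (Sum.inl '' cloneSet σ v l).ncard = (cloneSet σ v l).ncard :=
        Set.ncard_image_of_injective _ hinj
      have h2 : (Sum.inl '' anticloneSet σ v l).ncard = (anticloneSet σ v l).ncard :=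
        Set.ncard_image_of_injective _ hinj
      haveI : Fintype (IterV V (l+1)) := iterVFintype (l+1)
      cases hσ : σ l (liftV v l) with
      | true =>
        have hcu : (cloneSet σ v (l+1)) =
            Sum.inl '' cloneSet σ v l ∪ {Sum.inr (liftV v l)} := by
          rw [cloneSet, if_pos hσ]
          exact rfl
        have hau : (anticloneSet σ v (l+1)) = Sum.inl '' anticloneSet σ v l := by
          rw [anticloneSet, if_neg (by simp [hσ]), Set.union_empty]
          exact rfl
        show Set.ncard (α := IterV V l ⊕ IterV V l) (cloneSet σ v (l+1)) +
          Set.ncard (α := IterV V l ⊕ IterV V l) (anticloneSet σ v (l+1)) = l + 1 + 1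
        rw [hcu, hau, Set.ncard_union_eq (by simp) (Set.toFinite _) (Set.toFinite _),
          h1, h2, Set.ncard_singleton]
        omega
      | false =>
        have hcu : (cloneSet σ v (l+1)) = Sum.inl '' cloneSet σ v l := by
          rw [cloneSet, if_neg (by simp [hσ]), Set.union_empty]
          exact rfl
        have hau : (anticloneSet σ v (l+1)) =
            Sum.inl '' anticloneSet σ v l ∪ {Sum.inr (liftV v l)} := by
          rw [anticloneSet, if_pos hσ]
          exact rfl
        show Set.ncard (α := IterV V l ⊕ IterV V l) (cloneSet σ v (l+1)) +
          Set.ncard (α := IterV V l ⊕ IterV V l) (anticloneSet σ v (l+1)) = l + 1 + 1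
        rw [hcu, hau, Set.ncard_union_eq (by simp) (Set.toFinite _) (Set.toFinite _),
          h1, h2, Set.ncard_singleton]
        omega

end

lemma clique_ncard_le {α : Type} [Fintype α] {G : SimpleGraph α} {S : Set α}
    (h : G.IsClique S) : S.ncard ≤ G.cliqueNum := by
  classical
  have hfin : S.Finite := Set.toFinite S
  have hcl : G.IsClique (hfin.toFinset : Finset α) := by rwa [Set.Finite.coe_toFinset]
  rw [Set.ncard_eq_toFinset_card _ hfin]
  exact SimpleGraph.IsClique.card_le_cliqueNum (tc := hcl)

/-- For `H ∈ IIM_l(G)` and `v ∈ V(G)`, the sets `S_c(v)` and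
`S_a(v)` each induce a complete subgraph of `H`, `|S_c(v)| + |S_a(v)| = l + 1`, and
consequently `ω(H) ≥ ⌈(l+1)/2⌉` (in `ℕ`, `⌈(l+1)/2⌉ = (l+2)/2`). -/
theorem stmt14 {V : Type} [Fintype V] [Nonempty V] (G : SimpleGraph V) (v : V)
    (l : ℕ) (σ : ∀ i, IterV V i → Bool) :
    (iimGraph G σ l).IsClique (cloneSet σ v l) ∧
    (iimGraph G σ l).IsClique (anticloneSet σ v l) ∧
    (cloneSet σ v l).ncard + (anticloneSet σ v l).ncard = l + 1 ∧
    (l + 1 + 1) / 2 ≤ (iimGraph G σ l).cliqueNum := by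
  classical
  obtain ⟨hc, ha, _, _, hcard⟩ := key G v σ l
  refine ⟨hc, ha, hcard, ?_⟩
  by_cases h : (l + 1 + 1) / 2 ≤ (cloneSet σ v l).ncard
  · exact h.trans (clique_ncard_le hc)
  · have h2 : (l + 1 + 1) / 2 ≤ (anticloneSet σ v l).ncard := by omega
    exact h2.trans (clique_ncard_le ha)
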